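/- arXiv:2410.16384 — 4 statements merged into one kernel-verified Lean document; each statement's English description precedes it below -/
import Mathlib

section
/- Let $u,v:\mathbb{R}^n\to\mathbb{R}$ be twice differentiable at $x_0$, and for $t\in[0,1]$ set $w_t=v+t(u-v)$. Define the conformal Hessian $A[\varphi]=e^{-2\varphi}(-\nabla^2\varphi+\nabla\varphi\otimes\nabla\varphi-\tfrac12|\nabla\varphi|^2 I)$. Then at $x_0$, $A[w_t]=t e^{2(1-t)(u-v)}A[u]+(1-t)e^{-2t(u-v)}A[v]+\mathcal{C}$, where $\mathcal{C}=t(1-t)e^{-2w_t}(\tfrac12|\nabla(u-v)|^2 I-\nabla(u-v)\otimes\nabla(u-v))$. -/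
open scoped BigOperators

noncomputable def pd (n : ℕ) (v : (Fin n → ℝ) → ℝ) (x : Fin n → ℝ) (i : Fin n) : ℝ :=
  fderiv ℝ v x (Pi.single i 1)

noncomputable def pd2 (n : ℕ) (v : (Fin n → ℝ) → ℝ) (x : Fin n → ℝ) (i j : Fin n) : ℝ :=
  fderiv ℝ (fun y => fderiv ℝ v y (Pi.single j 1)) x (Pi.single i 1)

/-- Conformal Hessian `A[v] = e^{-2v}(-∇²v + ∇v⊗∇v - ½|∇v|² I)`. -/
noncomputable def Amat (n : ℕ) (v : (Fin n → ℝ) → ℝ) (x : Fin n → ℝ) :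
    Matrix (Fin n) (Fin n) ℝ :=
  Matrix.of fun i j =>
    Real.exp (-(2 * v x)) *
      (-(pd2 n v x i j) + pd n v x i * pd n v x j
        - (1/2) * (∑ k, (pd n v x k)^2) * (if i = j then 1 else 0))

/-- `k`-th elementary symmetric function of the eigenvalues of a symmetric matrix,
expressed as the sum of its principal `k×k` minors. -/
noncomputable def sigmaP (m : ℕ) (k : ℕ) (M : Matrix (Fin m) (Fin m) ℝ) : ℝ :=
  ∑ t ∈ Finset.univ.powersetCard k,
    Matrix.det (Matrix.of fun i j : {x // x ∈ t} => M i.1 j.1)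

/-- Algebraic identity for the conformal Hessian along the segment
`w_t = v + t(u-v)`: at a point of twice differentiability,
`A[w_t] = t e^{2(1-t)(u-v)} A[u] + (1-t) e^{-2t(u-v)} A[v] + 𝒞`. -/
theorem conformal_hessian_convex_combination
    (n : ℕ) (u v : (Fin n → ℝ) → ℝ) (x0 : Fin n → ℝ)
    (hu : ContDiffAt ℝ 2 u x0) (hv : ContDiffAt ℝ 2 v x0)
    (t : ℝ) (ht : t ∈ Set.Icc (0:ℝ) 1) :
    Amat n (fun x => v x + t * (u x - v x)) x0
      = (t * Real.exp (2 * (1 - t) * (u x0 - v x0))) • Amat n u x0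
        + ((1 - t) * Real.exp (-(2 * t * (u x0 - v x0)))) • Amat n v x0
        + (t * (1 - t) * Real.exp (-(2 * (v x0 + t * (u x0 - v x0))))) •
            Matrix.of (fun i j =>
              (1/2) * (∑ k, (pd n u x0 k - pd n v x0 k)^2) * (if i = j then (1:ℝ) else 0)
                - (pd n u x0 i - pd n v x0 i) * (pd n u x0 j - pd n v x0 j)) := by
  have hu1 : DifferentiableAt ℝ u x0 := hu.differentiableAt two_ne_zero
  have hv1 : DifferentiableAt ℝ v x0 := hv.differentiableAt two_ne_zero
  -- first derivatives of the combination at points of differentiability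
  have pdw : ∀ (y : Fin n → ℝ), DifferentiableAt ℝ u y → DifferentiableAt ℝ v y →
      ∀ j : Fin n, fderiv ℝ (fun x => v x + t * (u x - v x)) y (Pi.single j 1)
        = fderiv ℝ v y (Pi.single j 1)
          + t * (fderiv ℝ u y (Pi.single j 1) - fderiv ℝ v y (Pi.single j 1)) := by
    intro y hy1 hy2 j
    have h1 : DifferentiableAt ℝ (fun x => u x - v x) y := hy1.sub hy2
    rw [fderiv_fun_add hy2 (h1.const_mul t), fderiv_const_mul h1, fderiv_fun_sub hy1 hy2]
    simp
  have hpd : ∀ i : Fin n, pd n (fun x => v x + t * (u x - v x)) x0 i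
      = pd n v x0 i + t * (pd n u x0 i - pd n v x0 i) := fun i => pdw x0 hu1 hv1 i
  -- second derivatives
  have hpd2 : ∀ i j : Fin n, pd2 n (fun x => v x + t * (u x - v x)) x0 i j
      = pd2 n v x0 i j + t * (pd2 n u x0 i j - pd2 n v x0 i j) := by
    intro i j
    have hev : (fun y => fderiv ℝ (fun x => v x + t * (u x - v x)) y (Pi.single j 1))
        =ᶠ[nhds x0] fun y => fderiv ℝ v y (Pi.single j 1)
          + t * (fderiv ℝ u y (Pi.single j 1) - fderiv ℝ v y (Pi.single j 1)) := by
      filter_upwards [hu.eventually (by norm_num), hv.eventually (by norm_num)] with y hy1 hy2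
      exact pdw y (hy1.differentiableAt two_ne_zero) (hy2.differentiableAt two_ne_zero) j
    have hgu : DifferentiableAt ℝ (fun y => fderiv ℝ u y (Pi.single j 1)) x0 :=
      ((hu.fderiv_right (m := 1) (by norm_num)).differentiableAt one_ne_zero).clm_apply
        (differentiableAt_const _)
    have hgv : DifferentiableAt ℝ (fun y => fderiv ℝ v y (Pi.single j 1)) x0 :=
      ((hv.fderiv_right (m := 1) (by norm_num)).differentiableAt one_ne_zero).clm_apply
        (differentiableAt_const _)
    unfold pd2
    rw [hev.fderiv_eq, fderiv_fun_add hgv ((show DifferentiableAt ℝ (fun y => fderiv ℝ u y (Pi.single j 1) - fderiv ℝ v y (Pi.single j 1)) x0 from hgu.sub hgv).const_mul t),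
      fderiv_const_mul (show DifferentiableAt ℝ (fun y => fderiv ℝ u y (Pi.single j 1) - fderiv ℝ v y (Pi.single j 1)) x0 from hgu.sub hgv), fderiv_fun_sub hgu hgv]
    simp
  have hsum : ∑ k, (pd n (fun x => v x + t * (u x - v x)) x0 k) ^ 2
      = t * ∑ k, (pd n u x0 k) ^ 2 + (1 - t) * ∑ k, (pd n v x0 k) ^ 2
        - t * (1 - t) * ∑ k, (pd n u x0 k - pd n v x0 k) ^ 2 := by
    rw [Finset.mul_sum, Finset.mul_sum, Finset.mul_sum, ← Finset.sum_add_distrib,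
      ← Finset.sum_sub_distrib]
    refine Finset.sum_congr rfl fun k _ => ?_
    rw [hpd k]; ring
  ext i j
  simp only [Matrix.add_apply, Matrix.smul_apply, Matrix.of_apply, smul_eq_mul]
  have hAu : Real.exp (2 * (1 - t) * (u x0 - v x0)) * Amat n u x0 i j
      = Real.exp (-(2 * (v x0 + t * (u x0 - v x0)))) *
        (-(pd2 n u x0 i j) + pd n u x0 i * pd n u x0 j
          - 1 / 2 * (∑ k, (pd n u x0 k) ^ 2) * (if i = j then (1:ℝ) else 0)) := by
    unfold Amat
    simp only [Matrix.of_apply]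
    rw [← mul_assoc, ← Real.exp_add,
      show 2 * (1 - t) * (u x0 - v x0) + -(2 * u x0)
        = -(2 * (v x0 + t * (u x0 - v x0))) from by ring]
  have hAv : Real.exp (-(2 * t * (u x0 - v x0))) * Amat n v x0 i j
      = Real.exp (-(2 * (v x0 + t * (u x0 - v x0)))) *
        (-(pd2 n v x0 i j) + pd n v x0 i * pd n v x0 j
          - 1 / 2 * (∑ k, (pd n v x0 k) ^ 2) * (if i = j then (1:ℝ) else 0)) := by
    unfold Amat
    simp only [Matrix.of_apply]
    rw [← mul_assoc, ← Real.exp_add,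
      show -(2 * t * (u x0 - v x0)) + -(2 * v x0)
        = -(2 * (v x0 + t * (u x0 - v x0))) from by ring]
  rw [mul_assoc t, hAu, mul_assoc (1 - t), hAv]
  show Real.exp (-(2 * ((fun x => v x + t * (u x - v x)) x0))) *
      (-(pd2 n (fun x => v x + t * (u x - v x)) x0 i j)
        + pd n (fun x => v x + t * (u x - v x)) x0 i * pd n (fun x => v x + t * (u x - v x)) x0 j
        - 1 / 2 * (∑ k, (pd n (fun x => v x + t * (u x - v x)) x0 k) ^ 2)
          * (if i = j then (1:ℝ) else 0)) = _
  simp only [hpd2 i j, hpd i, hpd j, hsum]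
  ring
end

section
/- For $n\geq 2$ and integers $1\leq k\leq n/2$, if $q\in\mathbb{R}^n$, then the matrix $\tfrac12|q|^2 I - q\otimes q$ lies in $\overline{\Gamma_k}$, i.e. $\sigma_i$ of its eigenvalues is nonnegative for all $1\leq i\leq k$. -/
open scoped BigOperators

lemma det_aux {ι : Type*} [Fintype ι] [DecidableEq ι] [Nonempty ι] (c : ℝ) (hc : c ≠ 0)
    (f : ι → ℝ) :
    Matrix.det (Matrix.of fun i j : ι => c * (if i = j then 1 else 0) - f i * f j)
      = c ^ (Fintype.card ι - 1) * (c - ∑ i, f i ^ 2) := by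
  have h1 : (Matrix.of fun i j : ι => c * (if i = j then 1 else 0) - f i * f j)
      = c • (1 + Matrix.replicateCol Unit (fun i => -(f i / c)) * Matrix.replicateRow Unit f) := by
    ext i j
    simp only [Matrix.of_apply, Matrix.smul_apply, Matrix.add_apply, Matrix.one_apply,
      Matrix.mul_apply, Matrix.replicateCol_apply, Matrix.replicateRow_apply, Finset.univ_unique,
      Finset.sum_singleton, smul_eq_mul]
    by_cases h : i = j <;> simp [h] <;> field_simp <;> ring
  rw [h1, Matrix.det_smul, Matrix.det_one_add_replicateCol_mul_replicateRow]
  have hcard : 1 ≤ Fintype.card ι := Fintype.card_pos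
  have : (Fintype.card ι) = (Fintype.card ι - 1) + 1 := (Nat.succ_pred_eq_of_pos hcard).symm
  rw [this, pow_succ]
  have hdot : dotProduct f (fun i => -(f i / c)) = -((∑ i, f i ^ 2) / c) := by
    simp [dotProduct, Finset.sum_div, mul_div_assoc]
    congr 1; funext i; ring_nf
  rw [hdot]
  field_simp
  simp only [Nat.add_sub_cancel, Nat.add_sub_cancel_left]
  ring


lemma choose_ineq (n i : ℕ) (hi : 1 ≤ i) (hin : 2 * i ≤ n) :
    2 * (n - 1).choose (i - 1) ≤ n.choose i := by
  have hn : 1 ≤ n := le_trans (by omega) hin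
  have key : n * (n - 1).choose (i - 1) = n.choose i * i := by
    have := Nat.add_one_mul_choose_eq (n - 1) (i - 1)
    simp only [Nat.succ_eq_add_one, Nat.sub_add_cancel hn, Nat.sub_add_cancel hi] at this
    exact this
  have h2 : 2 * (n - 1).choose (i - 1) * i ≤ n.choose i * i := by
    calc 2 * (n - 1).choose (i - 1) * i = (2 * i) * (n - 1).choose (i - 1) := by ring
    _ ≤ n * (n - 1).choose (i - 1) := Nat.mul_le_mul_right _ hin
    _ = n.choose i * i := key
  exact Nat.le_of_mul_le_mul_right h2 hi


lemma count_aux (n i : ℕ) (hi : 1 ≤ i) (a : Fin n) :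
    ((Finset.univ.powersetCard i).filter (fun t => a ∈ t)).card
      = (n - 1).choose (i - 1) := by
  obtain ⟨j, rfl⟩ : ∃ j, i = j + 1 := ⟨i - 1, (Nat.succ_pred_eq_of_pos hi).symm⟩
  have ha : a ∉ Finset.univ.erase a := Finset.notMem_erase a _
  have huniv : (Finset.univ : Finset (Fin n)) = insert a (Finset.univ.erase a) := by
    rw [Finset.insert_erase (Finset.mem_univ a)]
  rw [huniv, Finset.powersetCard_succ_insert ha, Finset.filter_union]
  have h1 : ((Finset.univ.erase a).powersetCard (j+1)).filter (fun t => a ∈ t) = ∅ := by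
    rw [Finset.filter_eq_empty_iff]
    intro t ht hat
    exact ha ((Finset.mem_powersetCard.mp ht).1 hat)
  have h2 : (((Finset.univ.erase a).powersetCard j).image (insert a)).filter
      (fun t => a ∈ t) = ((Finset.univ.erase a).powersetCard j).image (insert a) := by
    rw [Finset.filter_eq_self]
    intro t ht
    obtain ⟨s, _, rfl⟩ := Finset.mem_image.mp ht
    exact Finset.mem_insert_self a s
  rw [h1, h2, Finset.empty_union, Finset.card_image_of_injOn, Finset.card_powersetCard,
    Finset.card_erase_of_mem (Finset.mem_univ a), Finset.card_univ, Fintype.card_fin]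
  · simp
  · intro s hs u hu hsu
    have hsa : a ∉ s := fun h => ha ((Finset.mem_powersetCard.mp hs).1 h)
    have hua : a ∉ u := fun h => ha ((Finset.mem_powersetCard.mp hu).1 h)
    rw [← Finset.erase_insert hsa, ← Finset.erase_insert hua, hsu]

lemma sum_aux (n i : ℕ) (hi : 1 ≤ i) (g : Fin n → ℝ) :
    ∑ t ∈ Finset.univ.powersetCard i, ∑ a ∈ t, g a
      = ((n - 1).choose (i - 1) : ℝ) * ∑ a, g a := by
  have : ∀ t ∈ Finset.univ.powersetCard i, ∑ a ∈ t, g a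
      = ∑ a : Fin n, if a ∈ t then g a else 0 := by
    intro t _
    rw [Finset.sum_ite_mem, Finset.univ_inter]
  rw [Finset.sum_congr rfl this, Finset.sum_comm]
  have : ∀ a : Fin n, (∑ t ∈ Finset.univ.powersetCard i, if a ∈ t then g a else 0)
      = ((n - 1).choose (i - 1) : ℝ) * g a := by
    intro a
    rw [← Finset.sum_filter, Finset.sum_const, count_aux n i hi a, nsmul_eq_mul]
  rw [Finset.sum_congr rfl fun a _ => this a, ← Finset.mul_sum]


/-- For `n ≥ 2` and `1 ≤ k ≤ n/2`, the matrix `½|q|² I - q⊗q` lies in the closed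
Garding cone `Γ̄_k`: all elementary symmetric functions `σ_i` of its eigenvalues,
`1 ≤ i ≤ k`, are nonnegative. -/
theorem half_normSq_id_sub_outer_mem_closed_gamma_k
    (n k : ℕ) (hn : 2 ≤ n) (hk : 1 ≤ k) (hkn : 2 * k ≤ n) (q : Fin n → ℝ) :
    ∀ i, 1 ≤ i → i ≤ k →
      0 ≤ sigmaP n i (Matrix.of fun i j =>
        (1/2) * (∑ m, q m ^ 2) * (if i = j then (1:ℝ) else 0) - q i * q j) := by
  intro i hi1 hik
  have hnonempty : ∀ t ∈ (Finset.univ : Finset (Fin n)).powersetCard i, Nonempty {x // x ∈ t} := by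
    intro t ht
    have : t.card = i := (Finset.mem_powersetCard.mp ht).2
    exact Finset.nonempty_coe_sort.mpr (Finset.card_pos.mp (by omega))
  set Q : ℝ := ∑ m, q m ^ 2 with hQ
  rcases eq_or_lt_of_le (Finset.sum_nonneg fun m (_ : m ∈ Finset.univ) => sq_nonneg (q m) : (0:ℝ) ≤ Q) with hQ0 | hQ0
  · -- Q = 0, so q = 0 and the matrix is zero
    have hq : ∀ m, q m = 0 := by
      intro m
      have := (Finset.sum_eq_zero_iff_of_nonneg
        (fun m (_ : m ∈ Finset.univ) => sq_nonneg (q m))).mp hQ0.symm m (Finset.mem_univ m)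
      exact sq_eq_zero_iff.mp this
    unfold sigmaP
    apply le_of_eq
    refine (Finset.sum_eq_zero fun t ht => ?_).symm
    haveI := hnonempty t ht
    have hzero : (Matrix.of fun a b : {x // x ∈ t} =>
        (Matrix.of fun i j : Fin n =>
          (1/2) * Q * (if i = j then (1:ℝ) else 0) - q i * q j) a.1 b.1) = 0 := by
      ext a b
      simp [hq, hQ]
    rw [hzero, Matrix.det_zero]
  · -- Q > 0
    set c : ℝ := (1/2) * Q with hc
    have hcpos : 0 < c := by rw [hc]; linarith
    have hdet : ∀ t ∈ Finset.univ.powersetCard i,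
        Matrix.det (Matrix.of fun a b : {x // x ∈ t} =>
          (Matrix.of fun i j : Fin n => (1/2) * Q * (if i = j then (1:ℝ) else 0)
            - q i * q j) a.1 b.1)
        = c ^ (i - 1) * (c - ∑ a ∈ t, q a ^ 2) := by
      intro t ht
      have hcard : t.card = i := (Finset.mem_powersetCard.mp ht).2
      have := hnonempty t ht
      have hmat : (Matrix.of fun a b : {x // x ∈ t} =>
          (Matrix.of fun i j : Fin n =>
            (1/2) * Q * (if i = j then (1:ℝ) else 0) - q i * q j) a.1 b.1)
          = Matrix.of fun a b : {x // x ∈ t} =>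
            c * (if a = b then (1:ℝ) else 0) - q a.1 * q b.1 := by
        ext a b
        simp only [Matrix.of_apply, hc]
        congr 2
        exact if_congr Subtype.ext_iff.symm rfl rfl
      rw [hmat, det_aux c (ne_of_gt hcpos) (fun a : {x // x ∈ t} => q a.1)]
      rw [Fintype.card_coe, hcard]
      congr 1
      rw [sub_right_inj]
      exact Finset.sum_coe_sort t (fun a => q a ^ 2)
    unfold sigmaP
    rw [Finset.sum_congr rfl hdet]
    rw [← Finset.mul_sum, Finset.sum_sub_distrib, Finset.sum_const,
      Finset.card_powersetCard, Finset.card_univ, Fintype.card_fin,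
      sum_aux n i hi1 (fun a => q a ^ 2), ← hQ]
    have hchoose : 2 * (n - 1).choose (i - 1) ≤ n.choose i :=
      choose_ineq n i hi1 (by omega)
    have hcast : (2 : ℝ) * ((n - 1).choose (i - 1) : ℝ) ≤ (n.choose i : ℝ) := by
      exact_mod_cast hchoose
    have h1 : 0 ≤ (n.choose i) • c - ((n - 1).choose (i - 1) : ℝ) * Q := by
      rw [nsmul_eq_mul, hc]
      nlinarith
    exact mul_nonneg (pow_nonneg (le_of_lt hcpos) _) h1
end

section
/- Let $n\geq 2$ and let $\Gamma\subsetneq\mathbb{R}^n$ be a nonempty open symmetric convex cone with vertex at the origin satisfying $\Gamma+\Gamma_n\subset\Gamma$, and assume $-\lambda^*\in\overline{\Gamma}$ where $\lambda^*=(1,-1,\dots,-1)$. If $u,v$ are $C^2$ near $x_0$ with eigenvalues $\lambda(A[u](x_0)),\lambda(A[v](x_0))\in\Gamma$, then $\lambda(A[u+t(v-u)](x_0))\in\Gamma$ for all $t\in[0,1]$. -/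
open scoped BigOperators
open scoped Topology

section Helpers

variable {n : ℕ}

lemma isHermitian_smul_real {A : Matrix (Fin n) (Fin n) ℝ} (c : ℝ) (h : A.IsHermitian) :
    (c • A).IsHermitian := by
  unfold Matrix.IsHermitian at *
  rw [Matrix.conjTranspose_smul, h]
  simp

lemma zero_mem_closure_cone {Γ : Set (Fin n → ℝ)} (hne : Γ.Nonempty)
    (hcone : ∀ lam ∈ Γ, ∀ t : ℝ, 0 < t → t • lam ∈ Γ) : (0 : Fin n → ℝ) ∈ closure Γ := by
  obtain ⟨x, hx⟩ := hne
  have htend : Filter.Tendsto (fun k : ℕ => (1 / ((k : ℝ) + 1)) • x) Filter.atTop (𝓝 0) := by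
    have h := (tendsto_one_div_add_atTop_nhds_zero_nat (𝕜 := ℝ)).smul_const x
    simpa using h
  exact mem_closure_of_tendsto htend (Filter.Eventually.of_forall fun k =>
    hcone x hx _ (by positivity))

lemma smul_mem_closure_cone {Γ : Set (Fin n → ℝ)} (hne : Γ.Nonempty)
    (hcone : ∀ lam ∈ Γ, ∀ t : ℝ, 0 < t → t • lam ∈ Γ) {x : Fin n → ℝ}
    (hx : x ∈ closure Γ) {c : ℝ} (hc : 0 ≤ c) : c • x ∈ closure Γ := by
  rcases eq_or_lt_of_le hc with h | h
  · rw [← h, zero_smul]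
    exact zero_mem_closure_cone hne hcone
  · exact map_mem_closure (continuous_const_smul c) hx (fun y hy => hcone y hy c h)

lemma add_mem_closure_cone {Γ : Set (Fin n → ℝ)} (hne : Γ.Nonempty) (hconv : Convex ℝ Γ)
    (hcone : ∀ lam ∈ Γ, ∀ t : ℝ, 0 < t → t • lam ∈ Γ) {x y : Fin n → ℝ}
    (hx : x ∈ closure Γ) (hy : y ∈ closure Γ) : x + y ∈ closure Γ := by
  have hmid : (1/2 : ℝ) • x + (1/2 : ℝ) • y ∈ closure Γ :=
    hconv.closure hx hy (by norm_num) (by norm_num) (by norm_num)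
  have h2 := smul_mem_closure_cone hne hcone hmid (c := 2) (by norm_num)
  have h3 : (2:ℝ) • ((1/2 : ℝ) • x + (1/2 : ℝ) • y) = x + y := by
    rw [smul_add, smul_smul, smul_smul]; norm_num
  rwa [h3] at h2

open Matrix in
lemma diag_conj_mem {Γ : Set (Fin n → ℝ)} (hconv : Convex ℝ Γ)
    (hsymm : ∀ σ : Equiv.Perm (Fin n), ∀ lam ∈ Γ, (lam ∘ σ) ∈ Γ)
    {M : Matrix (Fin n) (Fin n) ℝ} (hM : M.IsHermitian) (hMe : hM.eigenvalues ∈ Γ)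
    {W : Matrix (Fin n) (Fin n) ℝ} (hW : W ∈ Matrix.unitaryGroup (Fin n) ℝ) :
    (fun i => (star W * M * W) i i) ∈ Γ := by
  classical
  set μ := hM.eigenvalues with hμ
  set U : Matrix (Fin n) (Fin n) ℝ := ↑(hM.eigenvectorUnitary) with hU
  have hU1 : U * star U = 1 := Matrix.mem_unitaryGroup_iff.mp hM.eigenvectorUnitary.2
  have hW1 : W * star W = 1 := Matrix.mem_unitaryGroup_iff.mp hW
  have hW2 : star W * W = 1 := Matrix.mem_unitaryGroup_iff'.mp hW
  set V : Matrix (Fin n) (Fin n) ℝ := star U * W with hV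
  have hVs : star V = star W * U := by rw [hV, Matrix.star_mul, star_star]
  have hV1 : star V * V = 1 := by
    rw [hVs, hV, Matrix.mul_assoc, ← Matrix.mul_assoc U _ _, hU1, Matrix.one_mul, hW2]
  have hV2 : V * star V = 1 := by
    rw [hVs, hV, Matrix.mul_assoc, ← Matrix.mul_assoc W _ _, hW1, Matrix.one_mul,
      Matrix.mem_unitaryGroup_iff'.mp hM.eigenvectorUnitary.2]
  have hspec : M = U * Matrix.diagonal μ * star U := by
    have h := hM.spectral_theorem
    rwa [RCLike.ofReal_real_eq_id, Function.id_comp] at h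
  have hconj : star W * M * W = star V * Matrix.diagonal μ * V := by
    rw [hspec, hVs, hV]
    simp only [Matrix.mul_assoc]
  have hkey : ∀ i, (star W * M * W) i i = ∑ j, (V j i * V j i) * μ j := by
    intro i
    rw [hconj, Matrix.mul_assoc, Matrix.mul_apply]
    refine Finset.sum_congr rfl fun j _ => ?_
    rw [Matrix.star_apply, star_trivial, Matrix.mul_apply]
    rw [Finset.sum_eq_single j]
    · rw [Matrix.diagonal_apply_eq]; ring
    · intro k _ hk; rw [Matrix.diagonal_apply_ne' _ hk, zero_mul]
    · intro h; exact absurd (Finset.mem_univ j) h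
  set S : Matrix (Fin n) (Fin n) ℝ := Matrix.of (fun i j => V j i * V j i) with hS
  have hcolsum : ∀ i, ∑ j, V j i * V j i = 1 := by
    intro i
    have h := congrArg (fun A : Matrix (Fin n) (Fin n) ℝ => A i i) hV1
    simp only [Matrix.mul_apply, Matrix.star_apply, star_trivial, Matrix.one_apply_eq] at h
    exact h
  have hrowsum : ∀ j, ∑ i, V j i * V j i = 1 := by
    intro j
    have h := congrArg (fun A : Matrix (Fin n) (Fin n) ℝ => A j j) hV2
    simp only [Matrix.mul_apply, Matrix.star_apply, star_trivial, Matrix.one_apply_eq] at h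
    exact h
  have hSds : S ∈ doublyStochastic ℝ (Fin n) := by
    rw [mem_doublyStochastic_iff_sum]
    exact ⟨fun i j => mul_self_nonneg _, fun i => hcolsum i, fun j => hrowsum j⟩
  have himg : S *ᵥ μ ∈ Γ := by
    have hBirk : S ∈ convexHull ℝ {x | ∃ σ : Equiv.Perm (Fin n), σ.permMatrix ℝ = x} := by
      rw [← doublyStochastic_eq_convexHull_permMatrix]; exact hSds
    have hlin : IsLinearMap ℝ (fun A : Matrix (Fin n) (Fin n) ℝ => A *ᵥ μ) :=
      ⟨fun A B => Matrix.add_mulVec A B μ, fun c A => Matrix.smul_mulVec c A μ⟩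
    have hsub : {x | ∃ σ : Equiv.Perm (Fin n), σ.permMatrix ℝ = x} ⊆
        (fun A : Matrix (Fin n) (Fin n) ℝ => A *ᵥ μ) ⁻¹' Γ := by
      rintro x ⟨σ, rfl⟩
      have hmv : σ.permMatrix ℝ *ᵥ μ = μ ∘ σ := by
        funext i
        simp [Matrix.mulVec, dotProduct, Equiv.Perm.permMatrix, PEquiv.toMatrix_apply,
          Equiv.toPEquiv_apply]
      simp only [Set.mem_preimage, hmv]
      exact hsymm σ μ hMe
    exact convexHull_min hsub (hconv.is_linear_preimage hlin) hBirk
  have heq : (fun i => (star W * M * W) i i) = S *ᵥ μ := by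
    funext i
    rw [hkey i]
    simp [Matrix.mulVec, dotProduct, hS]
  rw [heq]; exact himg

end Helpers

section Calc

variable {n : ℕ} {u v : (Fin n → ℝ) → ℝ} {x0 : Fin n → ℝ} {t : ℝ}

theorem pd_comb (hu : ContDiffAt ℝ 2 u x0) (hv : ContDiffAt ℝ 2 v x0) :
    (∀ j, pd n (fun x => u x + t * (v x - u x)) x0 j
      = pd n u x0 j + t * (pd n v x0 j - pd n u x0 j)) ∧
    (∀ i j, pd2 n (fun x => u x + t * (v x - u x)) x0 i j
      = pd2 n u x0 i j + t * (pd2 n v x0 i j - pd2 n u x0 i j)) := by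
  have hde : ∀ᶠ y in 𝓝 x0, DifferentiableAt ℝ u y ∧ DifferentiableAt ℝ v y := by
    obtain ⟨su, hsu, hcu⟩ := hu.contDiffOn (m := 1) (by norm_num) (by simp)
    obtain ⟨sv, hsv, hcv⟩ := hv.contDiffOn (m := 1) (by norm_num) (by simp)
    obtain ⟨ou, hou1, hou2, hou3⟩ := mem_nhds_iff.mp hsu
    obtain ⟨ov, hov1, hov2, hov3⟩ := mem_nhds_iff.mp hsv
    filter_upwards [hou2.mem_nhds hou3, hov2.mem_nhds hov3] with y hyu hyv
    constructor
    · exact (hcu.differentiableOn one_ne_zero).differentiableAt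
        (mem_nhds_iff.mpr ⟨ou, hou1, hou2, hyu⟩)
    · exact (hcv.differentiableOn one_ne_zero).differentiableAt
        (mem_nhds_iff.mpr ⟨ov, hov1, hov2, hyv⟩)
  have hfd : ∀ y, DifferentiableAt ℝ u y → DifferentiableAt ℝ v y →
      HasFDerivAt (fun x => u x + t * (v x - u x))
        (fderiv ℝ u y + t • (fderiv ℝ v y - fderiv ℝ u y)) y := fun y hy1 hy2 =>
    hy1.hasFDerivAt.add ((hy2.hasFDerivAt.sub hy1.hasFDerivAt).const_mul t)
  have hfw : ∀ᶠ y in 𝓝 x0,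
      fderiv ℝ (fun x => u x + t * (v x - u x)) y
        = fderiv ℝ u y + t • (fderiv ℝ v y - fderiv ℝ u y) := by
    filter_upwards [hde] with y hy
    exact (hfd y hy.1 hy.2).fderiv
  have hx0 : DifferentiableAt ℝ u x0 ∧ DifferentiableAt ℝ v x0 := hde.self_of_nhds
  constructor
  · intro j
    have h := (hfd x0 hx0.1 hx0.2).fderiv
    simp only [pd, h, ContinuousLinearMap.add_apply, ContinuousLinearMap.coe_smul',
      Pi.smul_apply, ContinuousLinearMap.coe_sub', Pi.sub_apply, smul_eq_mul]
  · intro i j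
    have hGu : DifferentiableAt ℝ (fun y => fderiv ℝ u y (Pi.single j 1)) x0 := by
      have h1 : ContDiffAt ℝ 1 (fderiv ℝ u) x0 := hu.fderiv_right (by norm_num)
      exact (ContinuousLinearMap.apply ℝ ℝ (Pi.single j 1)).differentiableAt.comp x0
        (h1.differentiableAt one_ne_zero)
    have hGv : DifferentiableAt ℝ (fun y => fderiv ℝ v y (Pi.single j 1)) x0 := by
      have h1 : ContDiffAt ℝ 1 (fderiv ℝ v) x0 := hv.fderiv_right (by norm_num)
      exact (ContinuousLinearMap.apply ℝ ℝ (Pi.single j 1)).differentiableAt.comp x0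
        (h1.differentiableAt one_ne_zero)
    have hev : (fun y => fderiv ℝ (fun x => u x + t * (v x - u x)) y (Pi.single j 1))
        =ᶠ[𝓝 x0] (fun y => fderiv ℝ u y (Pi.single j 1)
          + t * (fderiv ℝ v y (Pi.single j 1) - fderiv ℝ u y (Pi.single j 1))) := by
      filter_upwards [hfw] with y hy
      simp only [hy, ContinuousLinearMap.add_apply, ContinuousLinearMap.coe_smul',
        Pi.smul_apply, ContinuousLinearMap.coe_sub', Pi.sub_apply, smul_eq_mul]
    have hd := (hGu.hasFDerivAt.add ((hGv.hasFDerivAt.sub hGu.hasFDerivAt).const_mul t)).fderiv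
    unfold pd2
    rw [hev.fderiv_eq]; erw [hd]
    simp only [ContinuousLinearMap.add_apply, ContinuousLinearMap.coe_smul',
      Pi.smul_apply, ContinuousLinearMap.coe_sub', Pi.sub_apply, smul_eq_mul]

theorem Amat_comb
    (hpdw : ∀ j, pd n (fun x => u x + t * (v x - u x)) x0 j
      = pd n u x0 j + t * (pd n v x0 j - pd n u x0 j))
    (hpd2w : ∀ i j, pd2 n (fun x => u x + t * (v x - u x)) x0 i j
      = pd2 n u x0 i j + t * (pd2 n v x0 i j - pd2 n u x0 i j)) :
    Amat n (fun x => u x + t * (v x - u x)) x0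
      = (Real.exp (-(2 * (u x0 + t * (v x0 - u x0)))) * ((1 - t) * Real.exp (2 * u x0)))
          • Amat n u x0
        + (Real.exp (-(2 * (u x0 + t * (v x0 - u x0)))) * (t * Real.exp (2 * v x0)))
          • Amat n v x0
        + (Real.exp (-(2 * (u x0 + t * (v x0 - u x0)))) * (t * (1 - t)))
          • Matrix.of (fun i j =>
              (1/2) * (∑ k, (pd n u x0 k - pd n v x0 k)^2) * (if i = j then 1 else 0)
                - (pd n u x0 i - pd n v x0 i) * (pd n u x0 j - pd n v x0 j)) := by
  have hsum : ∑ k, (pd n (fun x => u x + t * (v x - u x)) x0 k)^2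
      = (1-t) * ∑ k, (pd n u x0 k)^2 + t * ∑ k, (pd n v x0 k)^2
        - t*(1-t) * ∑ k, (pd n u x0 k - pd n v x0 k)^2 := by
    rw [Finset.mul_sum, Finset.mul_sum, Finset.mul_sum, ← Finset.sum_add_distrib,
      ← Finset.sum_sub_distrib]
    refine Finset.sum_congr rfl fun k _ => ?_
    rw [hpdw k]; ring
  ext i j
  simp only [Amat, Matrix.add_apply, Matrix.smul_apply, Matrix.of_apply, smul_eq_mul]
  rw [hpd2w i j, hpdw i, hpdw j, hsum]
  set δ : ℝ := (if i = j then (1:ℝ) else 0) with hδ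
  set Su : ℝ := ∑ k, (pd n u x0 k)^2 with hSu
  set Sv : ℝ := ∑ k, (pd n v x0 k)^2 with hSv
  set Sc : ℝ := ∑ k, (pd n u x0 k - pd n v x0 k)^2 with hSc
  simp only [Real.exp_neg]
  field_simp
  ring

end Calc

/-- Convexity of the admissible set for a general symmetric convex cone `Γ` with
`Γ + Γₙ ⊆ Γ` and `-λ* ∈ Γ̄`, `λ* = (1,-1,…,-1)`: if the eigenvalues of
`A[u](x₀)` and `A[v](x₀)` lie in `Γ`, so do those of `A[u + t(v-u)](x₀)`. -/
theorem segment_admissible_general_cone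
    (n : ℕ) (hn : 2 ≤ n)
    (Γ : Set (Fin n → ℝ)) (hopen : IsOpen Γ) (hne : Γ.Nonempty) (hproper : Γ ≠ Set.univ)
    (hsymm : ∀ σ : Equiv.Perm (Fin n), ∀ lam ∈ Γ, (lam ∘ σ) ∈ Γ)
    (hcone : ∀ lam ∈ Γ, ∀ t : ℝ, 0 < t → t • lam ∈ Γ)
    (hconv : Convex ℝ Γ)
    (hGn : ∀ lam ∈ Γ, ∀ μ : Fin n → ℝ, (∀ i, 0 < μ i) → lam + μ ∈ Γ)
    (lamStar : Fin n → ℝ) (hlamStar : lamStar = fun i => if i = ⟨0, by omega⟩ then 1 else -1)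
    (hstar : -lamStar ∈ closure Γ)
    (u v : (Fin n → ℝ) → ℝ) (x0 : Fin n → ℝ)
    (hu : ContDiffAt ℝ 2 u x0) (hv : ContDiffAt ℝ 2 v x0)
    (hHu : (Amat n u x0).IsHermitian) (hHv : (Amat n v x0).IsHermitian)
    (hAu : hHu.eigenvalues ∈ Γ) (hAv : hHv.eigenvalues ∈ Γ) :
    ∀ t ∈ Set.Icc (0:ℝ) 1,
      ∃ hH : (Amat n (fun x => u x + t * (v x - u x)) x0).IsHermitian,
        hH.eigenvalues ∈ Γ := by
  classical
  intro t ht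
  obtain ⟨ht0, ht1⟩ := ht
  obtain ⟨hpdw, hpd2w⟩ := pd_comb (t := t) hu hv
  have hid := Amat_comb (t := t) hpdw hpd2w
  set α : ℝ := Real.exp (-(2 * (u x0 + t * (v x0 - u x0)))) * ((1 - t) * Real.exp (2 * u x0))
    with hα
  set β : ℝ := Real.exp (-(2 * (u x0 + t * (v x0 - u x0)))) * (t * Real.exp (2 * v x0)) with hβ
  set γ : ℝ := Real.exp (-(2 * (u x0 + t * (v x0 - u x0)))) * (t * (1 - t)) with hγ
  set R : Matrix (Fin n) (Fin n) ℝ := Matrix.of (fun i j =>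
      (1/2) * (∑ k, (pd n u x0 k - pd n v x0 k)^2) * (if i = j then 1 else 0)
        - (pd n u x0 i - pd n v x0 i) * (pd n u x0 j - pd n v x0 j)) with hR
  have hRH : R.IsHermitian := by
    rw [hR]
    show Matrix.conjTranspose _ = _
    ext i j
    simp only [Matrix.conjTranspose_apply, Matrix.of_apply, star_trivial]
    have hij : (if j = i then (1:ℝ) else 0) = (if i = j then 1 else 0) := by
      by_cases h : i = j <;> simp [h, eq_comm]
    rw [hij]; ring
  have hTH : (α • Amat n u x0 + β • Amat n v x0 + γ • R).IsHermitian :=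
    ((isHermitian_smul_real α hHu).add (isHermitian_smul_real β hHv)).add
      (isHermitian_smul_real γ hRH)
  rw [hid]
  refine ⟨hTH, ?_⟩
  set W : Matrix (Fin n) (Fin n) ℝ := ↑(hTH.eigenvectorUnitary) with hWdef
  have hWmem : W ∈ Matrix.unitaryGroup (Fin n) ℝ := hTH.eigenvectorUnitary.2
  have hW1 : W * star W = 1 := Matrix.mem_unitaryGroup_iff.mp hWmem
  have hW2 : star W * W = 1 := Matrix.mem_unitaryGroup_iff'.mp hWmem
  have hdiag : ∀ i, hTH.eigenvalues i
      = (star W * (α • Amat n u x0 + β • Amat n v x0 + γ • R) * W) i i := by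
    intro i
    have h := hTH.conjStarAlgAut_star_eigenvectorUnitary
    rw [Unitary.conjStarAlgAut_star_apply] at h
    rw [RCLike.ofReal_real_eq_id, Function.id_comp] at h
    rw [h, Matrix.diagonal_apply_eq]
  have hsplit : ∀ i, (star W * (α • Amat n u x0 + β • Amat n v x0 + γ • R) * W) i i
      = α * ((star W * Amat n u x0 * W) i i) + β * ((star W * Amat n v x0 * W) i i)
        + γ * ((star W * R * W) i i) := by
    intro i
    have hms : star W * (α • Amat n u x0 + β • Amat n v x0 + γ • R) * W
        = α • (star W * Amat n u x0 * W) + β • (star W * Amat n v x0 * W)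
          + γ • (star W * R * W) := by
      rw [Matrix.mul_add, Matrix.mul_add, Matrix.add_mul, Matrix.add_mul,
        Matrix.mul_smul, Matrix.mul_smul, Matrix.mul_smul,
        Matrix.smul_mul, Matrix.smul_mul, Matrix.smul_mul]
    rw [hms]
    simp [Matrix.add_apply, Matrix.smul_apply, smul_eq_mul]
  have hd : (fun i => (star W * Amat n u x0 * W) i i) ∈ Γ :=
    diag_conj_mem hconv hsymm hHu hAu hWmem
  have he : (fun i => (star W * Amat n v x0 * W) i i) ∈ Γ :=
    diag_conj_mem hconv hsymm hHv hAv hWmem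
  set dv : Fin n → ℝ := fun i => (star W * Amat n u x0 * W) i i with hdv
  set ev : Fin n → ℝ := fun i => (star W * Amat n v x0 * W) i i with hevd
  have hα0 : 0 ≤ α := by
    rw [hα]
    exact mul_nonneg (Real.exp_pos _).le (mul_nonneg (by linarith) (Real.exp_pos _).le)
  have hβ0 : 0 ≤ β := by
    rw [hβ]
    exact mul_nonneg (Real.exp_pos _).le (mul_nonneg ht0 (Real.exp_pos _).le)
  have hγ0 : 0 ≤ γ := by
    rw [hγ]
    exact mul_nonneg (Real.exp_pos _).le (mul_nonneg ht0 (by linarith))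
  have hαβ : 0 < α + β := by
    rcases lt_or_eq_of_le ht1 with h | h
    · have hp : 0 < α := by
        rw [hα]
        exact mul_pos (Real.exp_pos _) (mul_pos (by linarith) (Real.exp_pos _))
      linarith
    · have hp : 0 < β := by
        rw [hβ]
        exact mul_pos (Real.exp_pos _) (mul_pos (by rw [h]; norm_num) (Real.exp_pos _))
      linarith
  have hαβne : α + β ≠ 0 := ne_of_gt hαβ
  have hq : α • dv + β • ev ∈ Γ := by
    have h1 : (α/(α+β)) • dv + (β/(α+β)) • ev ∈ Γ :=
      hconv hd he (div_nonneg hα0 hαβ.le) (div_nonneg hβ0 hαβ.le) (by field_simp)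
    have h2 := hcone _ h1 (α+β) hαβ
    have e1 : (α+β) * (α/(α+β)) = α := by field_simp
    have e2 : (α+β) * (β/(α+β)) = β := by field_simp
    rwa [smul_add, smul_smul, smul_smul, e1, e2] at h2
  -- diagonal of the rank-one correction
  set bW : Fin n → ℝ := fun i => ∑ jj, W jj i * (pd n u x0 jj - pd n v x0 jj) with hbW
  have hWcol : ∀ i, ∑ k, W k i * W k i = 1 := by
    intro i
    have h := congrArg (fun A : Matrix (Fin n) (Fin n) ℝ => A i i) hW2
    simp only [Matrix.mul_apply, Matrix.star_apply, star_trivial, Matrix.one_apply_eq] at h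
    exact h
  have hWrow : ∀ jj kk, ∑ i, W jj i * W kk i = if jj = kk then (1:ℝ) else 0 := by
    intro jj kk
    have h := congrArg (fun A : Matrix (Fin n) (Fin n) ℝ => A jj kk) hW1
    simp only [Matrix.mul_apply, Matrix.star_apply, star_trivial] at h
    rw [h, Matrix.one_apply]
  have hr : ∀ i, (star W * R * W) i i
      = (1/2) * (∑ k, (pd n u x0 k - pd n v x0 k)^2) - bW i * bW i := by
    intro i
    rw [Matrix.mul_apply]
    have hinner : ∀ k, (star W * R) i k
        = (1/2) * (∑ kk, (pd n u x0 kk - pd n v x0 kk)^2) * W k i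
          - bW i * (pd n u x0 k - pd n v x0 k) := by
      intro k
      rw [Matrix.mul_apply]
      have hterm : ∀ jj, (star W) i jj * R jj k
          = (if jj = k then (1/2) * (∑ kk, (pd n u x0 kk - pd n v x0 kk)^2) * W jj i else 0)
            - (W jj i * (pd n u x0 jj - pd n v x0 jj)) * (pd n u x0 k - pd n v x0 k) := by
        intro jj
        rw [Matrix.star_apply, star_trivial, hR]
        simp only [Matrix.of_apply]
        by_cases h : jj = k <;> simp [h] <;> ring
      rw [Finset.sum_congr rfl (fun jj _ => hterm jj), Finset.sum_sub_distrib,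
        Finset.sum_ite_eq' Finset.univ k, ← Finset.sum_mul]
      simp [hbW]
    have houter : ∀ k, (star W * R) i k * W k i
        = (1/2) * (∑ kk, (pd n u x0 kk - pd n v x0 kk)^2) * (W k i * W k i)
          - bW i * (W k i * (pd n u x0 k - pd n v x0 k)) := by
      intro k; rw [hinner k]; ring
    rw [Finset.sum_congr rfl (fun k _ => houter k), Finset.sum_sub_distrib,
      ← Finset.mul_sum, ← Finset.mul_sum, hWcol i]
    rw [hbW]
    ring
  have hbsq : ∑ i, bW i * bW i = ∑ k, (pd n u x0 k - pd n v x0 k)^2 := by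
    have h1 : ∀ i, bW i * bW i
        = ∑ jj, ∑ kk, (W jj i * (pd n u x0 jj - pd n v x0 jj))
            * (W kk i * (pd n u x0 kk - pd n v x0 kk)) := by
      intro i; rw [hbW]; rw [Finset.sum_mul_sum]
    rw [Finset.sum_congr rfl (fun i _ => h1 i), Finset.sum_comm]
    have h2 : ∀ jj, ∑ i, ∑ kk, (W jj i * (pd n u x0 jj - pd n v x0 jj))
        * (W kk i * (pd n u x0 kk - pd n v x0 kk))
        = ∑ kk, ((pd n u x0 jj - pd n v x0 jj) * (pd n u x0 kk - pd n v x0 kk))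
            * (∑ i, W jj i * W kk i) := by
      intro jj
      rw [Finset.sum_comm]
      refine Finset.sum_congr rfl fun kk _ => ?_
      rw [Finset.mul_sum]
      refine Finset.sum_congr rfl fun i _ => by ring
    rw [Finset.sum_congr rfl (fun jj _ => h2 jj)]
    have h3 : ∀ jj, ∑ kk, ((pd n u x0 jj - pd n v x0 jj) * (pd n u x0 kk - pd n v x0 kk))
        * (∑ i, W jj i * W kk i) = (pd n u x0 jj - pd n v x0 jj)^2 := by
      intro jj
      have h4 : ∀ kk, ((pd n u x0 jj - pd n v x0 jj) * (pd n u x0 kk - pd n v x0 kk))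
          * (∑ i, W jj i * W kk i)
          = if jj = kk then (pd n u x0 jj - pd n v x0 jj)^2 else 0 := by
        intro kk
        rw [hWrow jj kk]
        by_cases h : jj = kk
        · subst h; simp; ring
        · simp [h]
      rw [Finset.sum_congr rfl (fun kk _ => h4 kk), Finset.sum_ite_eq]
      simp
    exact Finset.sum_congr rfl (fun jj _ => h3 jj)
  set g : Fin n → ℝ := fun i => γ * ((star W * R * W) i i) with hg
  have hγr : ∀ i, g i
      = ∑ j, (γ * (bW j * bW j) / 2) * (if i = j then (-1:ℝ) else 1) := by
    intro i
    rw [hg]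
    simp only
    rw [hr i, ← hbsq]
    have hterm : ∀ j, (γ * (bW j * bW j) / 2) * (if i = j then (-1:ℝ) else 1)
        = γ * (bW j * bW j) / 2 - (if i = j then γ * (bW j * bW j) else 0) := by
      intro j; by_cases h : i = j <;> simp [h] <;> ring
    rw [Finset.sum_congr rfl (fun j _ => hterm j), Finset.sum_sub_distrib, Finset.sum_ite_eq]
    simp only [Finset.mem_univ, if_true]
    rw [← Finset.sum_div, ← Finset.mul_sum]
    ring
  have hneg : ∀ j : Fin n, (fun i : Fin n => if i = j then (-1:ℝ) else 1) ∈ closure Γ := by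
    intro j
    set z0 : Fin n := ⟨0, by omega⟩ with hz0
    have hswap : (fun i : Fin n => if i = j then (-1:ℝ) else 1)
        = (-lamStar) ∘ (Equiv.swap j z0) := by
      funext i
      simp only [Function.comp_apply, Pi.neg_apply, hlamStar]
      have hiff : (Equiv.swap j z0) i = z0 ↔ i = j := by
        constructor
        · intro hc
          exact (Equiv.swap j z0).injective (hc.trans (Equiv.swap_apply_left j z0).symm)
        · intro hc
          rw [hc, Equiv.swap_apply_left]
      by_cases h : i = j
      · rw [if_pos h, if_pos (hiff.mpr h)]
      · rw [if_neg h, if_neg (fun hc => h (hiff.mp hc))]; norm_num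
    rw [hswap]
    have hcont : Continuous (fun lam : Fin n → ℝ => lam ∘ ⇑(Equiv.swap j z0)) :=
      continuous_pi fun i => continuous_apply _
    show (fun lam : Fin n → ℝ => lam ∘ ⇑(Equiv.swap j z0)) (-lamStar) ∈ closure Γ
    exact map_mem_closure (f := fun lam : Fin n → ℝ => lam ∘ ⇑(Equiv.swap j z0)) hcont hstar
      (fun lam h => hsymm _ lam h)
  have hgmem : g ∈ closure Γ := by
    have hfun : g = ∑ j : Fin n,
        (γ * (bW j * bW j) / 2) • (fun i : Fin n => if i = j then (-1:ℝ) else 1) := by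
      funext i
      rw [hγr i, Finset.sum_apply]
      simp only [Pi.smul_apply, smul_eq_mul]
    rw [hfun]
    refine Finset.sum_induction _ (· ∈ closure Γ)
      (fun a b ha hb => add_mem_closure_cone hne hconv hcone ha hb)
      (zero_mem_closure_cone hne hcone)
      (fun j _ => smul_mem_closure_cone hne hcone (hneg j)
        (div_nonneg (mul_nonneg hγ0 (mul_self_nonneg _)) (by norm_num)))
  have hfinal : hTH.eigenvalues = (α • dv + β • ev) + g := by
    funext i
    rw [hdiag i, hsplit i]
    simp only [Pi.add_apply, Pi.smul_apply, smul_eq_mul, hdv, hevd, hg]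
  rw [hfinal]
  have hx : α • dv + β • ev ∈ interior Γ := by rw [hopen.interior_eq]; exact hq
  have hcombo := hconv.combo_interior_closure_mem_interior hx hgmem
    (by norm_num : (0:ℝ) < 1/2) (by norm_num : (0:ℝ) ≤ 1/2) (by norm_num)
  rw [hopen.interior_eq] at hcombo
  have h2 := hcone _ hcombo 2 (by norm_num)
  have h3 : (2:ℝ) • ((1/2:ℝ) • (α • dv + β • ev) + (1/2:ℝ) • g) = (α • dv + β • ev) + g := by
    rw [smul_add, smul_smul, smul_smul]; norm_num
  rwa [h3] at h2
end

section
/- Let $u\equiv 0$ and $v(x)=-2\log|x|$ on $\mathbb{R}^n\setminus\{0\}$, and $w_t=u+t(v-u)=tv$. Then $A[u]\equiv 0$, $A[v]\equiv 0$, while for $t\in(0,1)$ the eigenvalues satisfy $\lambda(A[w_t])(x)=-2t(1-t)|x|^{-2}e^{-2w_t(x)}(1,-1,\dots,-1)$ up to permutation; in particular $e^{2w_t(x)}A[w_t](x)=2t(1-t)|x|^{-2}(I-2|x|^{-2}x\otimes x)$. -/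
open scoped BigOperators

section Aux

lemma hasFDerivAt_S (n : ℕ) (x : Fin n → ℝ) :
    HasFDerivAt (fun y : Fin n → ℝ => ∑ k, y k ^ 2)
      (∑ k : Fin n, (2 * x k) • (ContinuousLinearMap.proj k : (Fin n → ℝ) →L[ℝ] ℝ)) x := by
  apply HasFDerivAt.fun_sum
  intro k _
  have h1 : HasFDerivAt (fun y : Fin n → ℝ => y k)
      (ContinuousLinearMap.proj k : (Fin n → ℝ) →L[ℝ] ℝ) x :=
    (ContinuousLinearMap.proj k : (Fin n → ℝ) →L[ℝ] ℝ).hasFDerivAt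
  have h2 := (hasDerivAt_pow 2 (x k)).comp_hasFDerivAt x h1
  simpa [Function.comp_def] using h2

lemma sum_proj_apply (n : ℕ) (x : Fin n → ℝ) (i : Fin n) :
    (∑ k : Fin n, (2 * x k) • (ContinuousLinearMap.proj k : (Fin n → ℝ) →L[ℝ] ℝ))
      (Pi.single i 1) = 2 * x i := by
  rw [ContinuousLinearMap.sum_apply]
  rw [Finset.sum_eq_single i]
  · simp
  · intro k _ hk
    simp [Pi.single_apply, hk]
  · simp

lemma hasFDerivAt_w (n : ℕ) (c : ℝ) (x : Fin n → ℝ) (hx : (∑ k, x k ^ 2) ≠ 0) :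
    HasFDerivAt (fun y : Fin n → ℝ => c * Real.log (∑ k, y k ^ 2))
      (c • ((∑ k, x k ^ 2)⁻¹ •
        (∑ k : Fin n, (2 * x k) • (ContinuousLinearMap.proj k : (Fin n → ℝ) →L[ℝ] ℝ)))) x := by
  have h1 := (Real.hasDerivAt_log hx).comp_hasFDerivAt x (hasFDerivAt_S n x)
  exact h1.const_mul c

lemma pd_w (n : ℕ) (c : ℝ) (x : Fin n → ℝ) (hx : (∑ k, x k ^ 2) ≠ 0) (i : Fin n) :
    pd n (fun y : Fin n → ℝ => c * Real.log (∑ k, y k ^ 2)) x i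
      = c * (∑ k, x k ^ 2)⁻¹ * (2 * x i) := by
  rw [pd, (hasFDerivAt_w n c x hx).fderiv]
  have := sum_proj_apply n x i
  simp only [ContinuousLinearMap.smul_apply, this, smul_eq_mul]
  ring

lemma pd2_w (n : ℕ) (c : ℝ) (x : Fin n → ℝ) (hx : (∑ k, x k ^ 2) ≠ 0) (i j : Fin n) :
    pd2 n (fun y : Fin n → ℝ => c * Real.log (∑ k, y k ^ 2)) x i j
      = 2 * c * (∑ k, x k ^ 2)⁻¹ * (if i = j then 1 else 0)
        - 4 * c * ((∑ k, x k ^ 2)⁻¹)^2 * x i * x j := by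
  have hS : Continuous (fun y : Fin n → ℝ => ∑ k, y k ^ 2) := by
    continuity
  have hopen : IsOpen {y : Fin n → ℝ | (∑ k, y k ^ 2) ≠ 0} :=
    isOpen_ne.preimage hS
  have hev : (fun y => fderiv ℝ (fun y : Fin n → ℝ => c * Real.log (∑ k, y k ^ 2)) y (Pi.single j 1))
      =ᶠ[nhds x] (fun y => (c * (∑ k, y k ^ 2)⁻¹) * (2 * y j)) := by
    filter_upwards [hopen.mem_nhds hx] with y hy
    have := pd_w n c y hy j
    rw [pd] at this
    rw [this]
  rw [pd2, hev.fderiv_eq]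
  have hf1 : HasFDerivAt (fun y : Fin n → ℝ => c * (∑ k, y k ^ 2)⁻¹)
      (c • ((-(((∑ k, x k ^ 2)) ^ 2)⁻¹) •
        (∑ k : Fin n, (2 * x k) • (ContinuousLinearMap.proj k : (Fin n → ℝ) →L[ℝ] ℝ)))) x := by
    exact ((hasDerivAt_inv hx).comp_hasFDerivAt x (hasFDerivAt_S n x)).const_mul c
  have hf2 : HasFDerivAt (fun y : Fin n → ℝ => 2 * y j)
      ((2:ℝ) • (ContinuousLinearMap.proj j : (Fin n → ℝ) →L[ℝ] ℝ)) x :=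
    ((ContinuousLinearMap.proj j : (Fin n → ℝ) →L[ℝ] ℝ)).hasFDerivAt.const_mul 2
  have hmul := hf1.fun_mul hf2
  rw [hmul.fderiv]
  simp only [ContinuousLinearMap.add_apply, ContinuousLinearMap.smul_apply,
    sum_proj_apply, smul_eq_mul, ContinuousLinearMap.proj_apply]
  have hsingle : (Pi.single i 1 : Fin n → ℝ) j = if i = j then 1 else 0 := by
    simp [Pi.single_apply, eq_comm]
  rw [hsingle]
  by_cases h : i = j <;> simp [h] <;> ring

lemma Amat_log (n : ℕ) (c : ℝ) (x : Fin n → ℝ) (hx : (∑ k, x k ^ 2) ≠ 0) (i j : Fin n) :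
    Amat n (fun y : Fin n → ℝ => c * Real.log (∑ k, y k ^ 2)) x i j
      = Real.exp (-(2 * (c * Real.log (∑ k, x k ^ 2)))) *
          ((-(2 * c * (1 + c)) * (∑ k, x k ^ 2)⁻¹) * (if i = j then 1 else 0)
            + (4 * c * (1 + c)) * ((∑ k, x k ^ 2)⁻¹)^2 * x i * x j) := by
  have hsum : (∑ k, (pd n (fun y : Fin n → ℝ => c * Real.log (∑ k, y k ^ 2)) x k)^2)
      = 4 * c^2 * ((∑ k, x k ^ 2)⁻¹)^2 * (∑ k, x k ^ 2) := by
    rw [show (4 * c^2 * ((∑ k, x k ^ 2)⁻¹)^2 * (∑ k, x k ^ 2))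
        = ∑ k, (4 * c^2 * ((∑ k, x k ^ 2)⁻¹)^2) * x k ^ 2 by rw [← Finset.mul_sum]]
    apply Finset.sum_congr rfl
    intro k _
    rw [pd_w n c x hx k]; ring
  rw [Amat]
  simp only [Matrix.of_apply]
  rw [hsum, pd2_w n c x hx i j, pd_w n c x hx i, pd_w n c x hx j]
  have hinv : ((∑ k, x k ^ 2)⁻¹) * (∑ k, x k ^ 2) = 1 := inv_mul_cancel₀ hx
  congr 1
  by_cases h : i = j
  · simp only [h, if_true]
    linear_combination (-(2*c^2)*((∑ k, x k ^ 2)⁻¹)) * hinv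
  · simp only [h, if_false]
    ring

open Polynomial Matrix in
lemma charpoly_rank_one (m : ℕ) (hm : 1 ≤ m) (a b : ℝ) (x : Fin m → ℝ)
    (hb : b * (∑ k, x k ^ 2) = -2 * a) :
    (Matrix.of fun i j : Fin m => a * (if i = j then 1 else 0) + b * x i * x j).charpoly
      = (X - C a) ^ (m - 1) * (X + C a) := by
  set M : Matrix (Fin m) (Fin m) ℝ :=
    Matrix.of fun i j : Fin m => a * (if i = j then 1 else 0) + b * x i * x j with hM
  have hinf : ({a}ᶜ : Set ℝ).Infinite := (Set.finite_singleton a).infinite_compl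
  apply Polynomial.eq_of_infinite_eval_eq
  apply hinf.mono
  intro r hr
  · have hra : r - a ≠ 0 := sub_ne_zero.mpr hr
    simp only [Set.mem_setOf_eq]
    have hdet : eval r M.charpoly
        = ((M.charmatrix).map (Polynomial.evalRingHom r)).det := by
      have h := RingHom.map_det (Polynomial.evalRingHom r) M.charmatrix
      rw [RingHom.mapMatrix_apply] at h
      simpa [Matrix.charpoly] using h
    have hmat : (M.charmatrix).map (Polynomial.evalRingHom r)
        = (r - a) • ((1 : Matrix (Fin m) (Fin m) ℝ)
            + Matrix.replicateCol Unit x * Matrix.replicateRow Unit (fun k => (-b / (r - a)) * x k)) := by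
      ext i j
      by_cases h : i = j
      · subst h
        simp [Matrix.charmatrix_apply_eq, Matrix.mul_apply, hM, Matrix.one_apply]
        field_simp
        ring
      · simp [Matrix.charmatrix_apply_ne _ _ _ h, Matrix.mul_apply, hM, Matrix.one_apply, h]
        field_simp
    rw [hdet, hmat, Matrix.det_smul, Matrix.det_one_add_replicateCol_mul_replicateRow]
    have hdot : (fun k => (-b / (r - a)) * x k) ⬝ᵥ x = 2 * a / (r - a) := by
      simp only [dotProduct]
      rw [show ∑ k, (-b / (r - a)) * x k * x k = (-b/(r-a)) * ∑ k, x k ^2 by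
        rw [Finset.mul_sum]; apply Finset.sum_congr rfl; intro k _; ring]
      rw [show (-b/(r-a)) * (∑ k, x k ^2) = -(b * (∑ k, x k^2))/(r-a) by ring, hb]
      ring
    rw [hdot]
    have hmm : m = (m - 1) + 1 := (Nat.succ_pred_eq_of_pos hm).symm
    simp only [eval_mul, eval_pow, eval_sub, eval_add, eval_X, eval_C, Fintype.card_fin]
    rw [hmm, pow_succ]
    simp only [Nat.add_sub_cancel]
    field_simp
    ring

end Aux

/-- Counterexample to convexity for cones with `-λ* ∉ Γ̄`: for `u ≡ 0`,
`v = -2log|x|`, `w_t = tv`, one has `A[u] ≡ 0`, `A[v] ≡ 0`, while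
`e^{2w_t}A[w_t](x) = 2t(1-t)|x|⁻²(I - 2|x|⁻² x⊗x)`, whose eigenvalues are
`-2t(1-t)|x|⁻²e^{-2w_t}·(1,-1,…,-1)` up to permutation (expressed via the
characteristic polynomial). -/
theorem convexity_counterexample
    (n : ℕ) (hn : 1 ≤ n)
    (u v : (Fin n → ℝ) → ℝ) (hu : u = fun _ => 0)
    (hv : v = fun x => -2 * Real.log (Real.sqrt (∑ k, x k ^ 2))) :
    ∀ x : Fin n → ℝ, x ≠ 0 →
      Amat n u x = 0
      ∧ Amat n v x = 0
      ∧ ∀ t ∈ Set.Ioo (0:ℝ) 1,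
          (∀ i j, Real.exp (2 * (t * v x)) * Amat n (fun y => t * v y) x i j
              = 2 * t * (1 - t) * (∑ k, x k ^ 2)⁻¹ *
                  ((if i = j then 1 else 0) - 2 * (∑ k, x k ^ 2)⁻¹ * x i * x j))
          ∧ (Amat n (fun y => t * v y) x).charpoly
              = (Polynomial.X - Polynomial.C
                    (2 * t * (1 - t) * (∑ k, x k ^ 2)⁻¹ * Real.exp (-(2 * (t * v x))))) ^ (n - 1)
                  * (Polynomial.X + Polynomial.C
                    (2 * t * (1 - t) * (∑ k, x k ^ 2)⁻¹ * Real.exp (-(2 * (t * v x))))) := by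
  -- rewrite v without the square root
  have hv' : v = fun y : Fin n → ℝ => (-1 : ℝ) * Real.log (∑ k, y k ^ 2) := by
    rw [hv]; funext y
    rw [Real.log_sqrt (Finset.sum_nonneg fun k _ => sq_nonneg (y k))]
    ring
  have hu' : u = fun y : Fin n → ℝ => (0 : ℝ) * Real.log (∑ k, y k ^ 2) := by
    rw [hu]; funext y; ring
  intro x hx0
  -- the sum of squares is nonzero
  obtain ⟨i0, hi0⟩ : ∃ i, x i ≠ 0 := Function.ne_iff.mp hx0
  have hxpos : 0 < (∑ k, x k ^ 2) :=
    Finset.sum_pos' (fun k _ => sq_nonneg (x k))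
      ⟨i0, Finset.mem_univ i0, by positivity⟩
  have hx : (∑ k, x k ^ 2) ≠ 0 := ne_of_gt hxpos
  have hinv : ((∑ k, x k ^ 2)⁻¹) * (∑ k, x k ^ 2) = 1 := inv_mul_cancel₀ hx
  refine ⟨?_, ?_, ?_⟩
  · ext i j
    rw [hu', Amat_log n 0 x hx i j]
    simp
  · ext i j
    rw [hv', Amat_log n (-1) x hx i j]
    simp
  · intro t ht
    have hw : (fun y => t * v y) = fun y : Fin n → ℝ => (-t) * Real.log (∑ k, y k ^ 2) := by
      rw [hv']; funext y; ring
    have hvx : t * v x = (-t) * Real.log (∑ k, x k ^ 2) := by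
      simp only [hv']; ring
    have hentry : ∀ i j, Amat n (fun y => t * v y) x i j
        = (2 * t * (1 - t) * (∑ k, x k ^ 2)⁻¹ * Real.exp (-(2 * (t * v x))))
            * (if i = j then 1 else 0)
          + (-(4 * t * (1 - t)) * ((∑ k, x k ^ 2)⁻¹)^2 * Real.exp (-(2 * (t * v x))))
            * x i * x j := by
      intro i j
      rw [hw, Amat_log n (-t) x hx i j, ← hvx]
      ring
    constructor
    · intro i j
      rw [hentry i j]
      have hee : Real.exp (2 * (t * v x)) * Real.exp (-(2 * (t * v x))) = 1 := by
        rw [← Real.exp_add]; simp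
      by_cases h : i = j
      · simp only [h, if_true]
        linear_combination (2*t*(1-t)*(∑ k, x k ^ 2)⁻¹
          - 4*t*(1-t)*((∑ k, x k ^ 2)⁻¹)^2 * x j * x j) * hee
      · simp only [h, if_false]
        linear_combination (-(4*t*(1-t))*((∑ k, x k ^ 2)⁻¹)^2 * x i * x j) * hee
    · have hM : Amat n (fun y => t * v y) x
          = Matrix.of fun i j : Fin n =>
              (2 * t * (1 - t) * (∑ k, x k ^ 2)⁻¹ * Real.exp (-(2 * (t * v x))))
                * (if i = j then 1 else 0)
              + (-(4 * t * (1 - t)) * ((∑ k, x k ^ 2)⁻¹)^2 * Real.exp (-(2 * (t * v x))))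
                * x i * x j := by
        ext i j
        rw [hentry i j]
        simp
      rw [hM]
      apply charpoly_rank_one n hn
      have : ((∑ k, x k ^ 2)⁻¹)^2 * (∑ k, x k ^ 2) = (∑ k, x k ^ 2)⁻¹ := by
        rw [sq]; rw [mul_assoc, hinv, mul_one]
      calc (-(4 * t * (1 - t)) * ((∑ k, x k ^ 2)⁻¹)^2 * Real.exp (-(2 * (t * v x))))
            * (∑ k, x k ^ 2)
          = -(4 * t * (1 - t)) * (((∑ k, x k ^ 2)⁻¹)^2 * (∑ k, x k ^ 2))
              * Real.exp (-(2 * (t * v x))) := by ring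
        _ = -2 * (2 * t * (1 - t) * (∑ k, x k ^ 2)⁻¹ * Real.exp (-(2 * (t * v x)))) := by
              rw [this]; ring
end
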